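/- Let A be a commutative von Neumann regular ring of characteristic 2 and R = A ⋉ A its trivial self-extension. Then every R-module M fits into a short exact sequence 0 → M → G → M → 0 with G a flat R-module. Concretely, for an R-module (U, f) with f² = 0, setting G = U × U with structure map g(u,v) = (v,0), the maps β(u) = (u, f(u)) and α(u,v) = f(u) + v give an exact sequence 0 → (U,f) → (G,g) → (U,f) → 0 of R-modules, and (G,g) is flat. -/

import Mathlib

open TrivSqZeroExt
open scoped TensorProduct

/-- The ring homomorphism `A ⋉ A → End_A U` sending `(a,b)` to `a•id + b•f`, for an
`A`-endomorphism `f` of `U` with `f² = 0`. -/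
def pairRingHom {A : Type*} [CommRing A] {U : Type*} [AddCommGroup U] [Module A U]
    (f : U →ₗ[A] U) (hf : f ∘ₗ f = 0) :
    TrivSqZeroExt A A →+* Module.End A U where
  toFun r := r.fst • (LinearMap.id : U →ₗ[A] U) + r.snd • f
  map_one' := by simp [Module.End.one_eq_id]
  map_mul' r s := by
    ext u
    have hffu : f (f u) = 0 := by
      have := DFunLike.congr_fun hf u
      simpa using this
    simp only [fst_mul, snd_mul, Module.End.mul_apply, LinearMap.add_apply,
      LinearMap.smul_apply, LinearMap.id_apply, map_add, map_smul, smul_eq_mul,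
      MulOpposite.smul_eq_mul_unop, MulOpposite.unop_op, hffu, smul_zero]
    module
  map_zero' := by simp
  map_add' r s := by
    ext u
    simp only [fst_add, snd_add, LinearMap.add_apply, LinearMap.smul_apply,
      LinearMap.id_apply, add_smul]
    module

/-- The `A ⋉ A`-module structure on `U` attached to a pair `(U, f)` with `f² = 0`:
`(a,b) • u = a • u + b • f u`. -/
def pairModule {A : Type*} [CommRing A] {U : Type*} [AddCommGroup U] [Module A U]
    (f : U →ₗ[A] U) (hf : f ∘ₗ f = 0) : Module (TrivSqZeroExt A A) U :=
  Module.compHom U (pairRingHom f hf)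

lemma vnr_fg_ideal {A : Type*} [CommRing A] (hreg : ∀ a : A, ∃ b : A, a = a * b * a)
    {I : Ideal A} (hI : I.FG) : ∃ e : A, e * e = e ∧ I = Ideal.span {e} := by
  refine Submodule.fg_induction (motive := fun N _ => ∃ e : A, e * e = e ∧ N = Ideal.span {e}) ?_ ?_ I hI
  · intro x
    obtain ⟨b, hb⟩ := hreg x
    refine ⟨x * b, by linear_combination (-b) * hb, ?_⟩
    show Ideal.span {x} = Ideal.span {x * b}
    apply le_antisymm
    · exact Ideal.span_singleton_le_span_singleton.mpr ⟨x, by linear_combination hb⟩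
    · exact Ideal.span_singleton_le_span_singleton.mpr ⟨b, rfl⟩
  · rintro M₁ M₂ _ _ ⟨e, he, rfl⟩ ⟨f, hfi, rfl⟩
    refine ⟨e + (f - e * f), by linear_combination (1 - f) * he + (1 - 2*e + e*e) * hfi, ?_⟩
    apply le_antisymm
    · rw [sup_le_iff]
      constructor
      · exact Ideal.span_singleton_le_span_singleton.mpr ⟨e, by linear_combination (f - 1) * he⟩
      · exact Ideal.span_singleton_le_span_singleton.mpr ⟨f, by linear_combination (e - 1) * hfi⟩
    · rw [Ideal.span_le, Set.singleton_subset_iff, SetLike.mem_coe]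
      have h1 : e ∈ Ideal.span {e} ⊔ Ideal.span {f} :=
        Submodule.mem_sup_left (Ideal.subset_span rfl)
      have h2 : f - e * f ∈ Ideal.span {e} ⊔ Ideal.span {f} := by
        have h3 : f - e * f = (1 - e) * f := by ring
        rw [h3]
        exact Submodule.mem_sup_right (Ideal.mul_mem_left _ _ (Ideal.subset_span rfl))
      exact Submodule.add_mem _ h1 h2

/-- Every module over a commutative von Neumann regular ring is flat. -/
lemma vnr_flat {A : Type*} [CommRing A] (hreg : ∀ a : A, ∃ b : A, a = a * b * a)
    (M : Type*) [AddCommGroup M] [Module A M] : Module.Flat A M := by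
  rw [Module.Flat.iff_rTensor_injective]
  intro I hI
  obtain ⟨e, he, hIe⟩ := vnr_fg_ideal hreg hI
  have hmem : ∀ a : A, e * a ∈ I := by
    intro a
    rw [hIe, Ideal.mem_span_singleton]
    exact ⟨a, rfl⟩
  let r : A →ₗ[A] I :=
    { toFun := fun a => ⟨e * a, hmem a⟩
      map_add' := by intro x y; ext; simp [mul_add]
      map_smul' := by intro c x; ext; simp [smul_eq_mul]; ring }
  have hri : r.comp I.subtype = LinearMap.id := by
    ext ⟨x, hx⟩
    rw [hIe, Ideal.mem_span_singleton] at hx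
    obtain ⟨c, rfl⟩ := hx
    show e * (e * c) = e * c
    linear_combination c * he
  have hcomp : (LinearMap.rTensor M r).comp (LinearMap.rTensor M I.subtype) = LinearMap.id := by
    rw [← LinearMap.rTensor_comp, hri, LinearMap.rTensor_id]
  intro x y hxy
  have h2 := congrArg (LinearMap.rTensor M r) hxy
  rw [← LinearMap.comp_apply, ← LinearMap.comp_apply, hcomp] at h2
  simpa using h2


set_option maxHeartbeats 2000000 in
theorem stmt_8 {A : Type*} [CommRing A] (hreg : ∀ a : A, ∃ b : A, a = a * b * a)
    (hchar : (2 : A) = 0)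
    {U : Type*} [AddCommGroup U] [Module A U] (f : U →ₗ[A] U) (hf : f ∘ₗ f = 0) :
    letI : Module (TrivSqZeroExt A A) U := pairModule f hf
    letI : Module (TrivSqZeroExt A A) (U × U) :=
      pairModule ((LinearMap.snd A U U).prod 0) (by ext x <;> simp)
    ∃ (β : U →ₗ[TrivSqZeroExt A A] (U × U)) (α : (U × U) →ₗ[TrivSqZeroExt A A] U),
      (∀ u : U, β u = (u, f u)) ∧ (∀ p : U × U, α p = f p.1 + p.2) ∧
      Function.Injective β ∧ Function.Surjective α ∧
      LinearMap.ker α = LinearMap.range β ∧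
      Module.Flat (TrivSqZeroExt A A) (U × U) := by
  have hffu : ∀ u : U, f (f u) = 0 := fun u => by
    have h := DFunLike.congr_fun hf u; simpa using h
  have h2 : ∀ x : U, x + x = 0 := fun x => by
    have h := two_smul A x
    rw [hchar, zero_smul] at h
    exact h.symm
  have pf : ((LinearMap.snd A U U).prod 0) ∘ₗ ((LinearMap.snd A U U).prod 0)
      = (0 : (U × U) →ₗ[A] (U × U)) := by ext x <;> simp
  have hsmulU : ∀ (h : f ∘ₗ f = 0) (r : TrivSqZeroExt A A) (u : U),
      (letI : Module (TrivSqZeroExt A A) U := pairModule f h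
       r • u) = r.fst • u + r.snd • f u := fun h r u => rfl
  have hsmulUU : ∀ (h : ((LinearMap.snd A U U).prod 0) ∘ₗ ((LinearMap.snd A U U).prod 0)
        = (0 : (U × U) →ₗ[A] (U × U))) (r : TrivSqZeroExt A A) (p : U × U),
      (letI : Module (TrivSqZeroExt A A) (U × U) :=
        pairModule ((LinearMap.snd A U U).prod 0) h
       r • p) = (r.fst • p.1 + r.snd • p.2, r.fst • p.2) := by
    intro h r p
    have e1 : (letI : Module (TrivSqZeroExt A A) (U × U) :=
        pairModule ((LinearMap.snd A U U).prod 0) h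
        r • p) = r.fst • p + r.snd • (p.2, (0 : U)) := rfl
    rw [e1]
    simp [Prod.ext_iff]
  let β := @LinearMap.mk (TrivSqZeroExt A A) (TrivSqZeroExt A A) _ _ (RingHom.id _) U (U × U)
      _ _ (pairModule f hf) (pairModule ((LinearMap.snd A U U).prod 0) pf)
      ⟨fun u => (u, f u), fun u v => by simp [Prod.ext_iff]⟩
      (fun r u => by
        simp only [RingHom.id_apply, AddHom.coe_mk]
        rw [hsmulU, hsmulUU]
        simp [Prod.ext_iff, hffu])
  let α := @LinearMap.mk (TrivSqZeroExt A A) (TrivSqZeroExt A A) _ _ (RingHom.id _) (U × U) U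
      _ _ (pairModule ((LinearMap.snd A U U).prod 0) pf) (pairModule f hf)
      ⟨fun p => f p.1 + p.2, fun p q => by
        simp only [Prod.fst_add, Prod.snd_add, map_add]
        abel⟩
      (fun r p => by
        simp only [RingHom.id_apply, AddHom.coe_mk]
        rw [hsmulU, hsmulUU]
        simp [map_add, map_smul, hffu]
        abel)
  refine ⟨β, α, fun u => rfl, fun p => rfl, ?_, ?_, ?_, ?_⟩
  · -- β injective
    intro u v h
    exact congrArg Prod.fst h
  · -- α surjective
    intro v
    refine ⟨(0, v), ?_⟩
    show f 0 + v = v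
    simp
  · -- ker α = range β
    refine @Submodule.ext _ _ _ _ (pairModule ((LinearMap.snd A U U).prod 0) pf) _ _ fun p => ?_
    simp only [LinearMap.mem_ker, LinearMap.mem_range, LinearMap.coe_mk, AddHom.coe_mk]
    constructor
    · intro hp
      refine ⟨p.1, ?_⟩
      have hp2 : p.2 = f p.1 := by
        have hn1 : -(f p.1) = p.2 := neg_eq_of_add_eq_zero_right hp
        have hn2 : -(f p.1) = f p.1 := neg_eq_of_add_eq_zero_right (h2 (f p.1))
        rw [← hn1, hn2]
      exact Prod.ext rfl hp2.symm
    · rintro ⟨u, rfl⟩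
      show f u + f u = 0
      exact h2 (f u)
  · -- flatness
    letI instUU : Module (TrivSqZeroExt A A) (U × U) :=
      pairModule ((LinearMap.snd A U U).prod 0) (by ext x <;> simp)
    show Module.Flat (TrivSqZeroExt A A) (U × U)
    haveI : Module.Flat A U := vnr_flat hreg U
    set ε : TrivSqZeroExt A A := inr 1 with hε
    have h1 : ∀ r : TrivSqZeroExt A A, r.fst • (1 : TrivSqZeroExt A A) + r.snd • ε = r := by
      intro r
      refine TrivSqZeroExt.ext ?_ ?_ <;> simp [hε]
    have hre : ∀ r : TrivSqZeroExt A A, r * ε = r.fst • ε := by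
      intro r
      refine TrivSqZeroExt.ext ?_ ?_ <;> simp [hε]
    have hsm : ∀ (r : TrivSqZeroExt A A) (p : U × U),
        r • p = (r.fst • p.1 + r.snd • p.2, r.fst • p.2) := by
      intro r p
      have e1 : r • p = r.fst • p + r.snd • (p.2, (0 : U)) := rfl
      rw [e1]
      simp [Prod.ext_iff]
    have key : ∀ (a : A) (x : TrivSqZeroExt A A) (u : U),
        x ⊗ₜ[A] (a • u) = (a • x) ⊗ₜ[A] u := fun a x u =>
      (TensorProduct.smul_tmul a x u).symm
    -- the A-bilinear map giving the inverse
    let bil : TrivSqZeroExt A A →ₗ[A] U →ₗ[A] (U × U) :=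
      { toFun := fun s =>
          { toFun := fun u => (s.snd • u, s.fst • u)
            map_add' := fun u v => by simp [Prod.ext_iff, smul_add]
            map_smul' := fun a u => by simp [Prod.ext_iff, smul_comm a] }
        map_add' := fun s t => by
          ext u
          · simp [add_smul]
          · simp [add_smul]
        map_smul' := fun a s => by
          ext u
          · simp [mul_smul]
          · simp [mul_smul] }
    let φ : (TrivSqZeroExt A A ⊗[A] U) →ₗ[A] (U × U) := TensorProduct.lift bil
    let ψf : (U × U) →ₗ[TrivSqZeroExt A A] (TrivSqZeroExt A A ⊗[A] U) :=
      { toFun := fun p => ε ⊗ₜ[A] p.1 + (1 : TrivSqZeroExt A A) ⊗ₜ[A] p.2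
        map_add' := fun p q => by
          simp only [Prod.fst_add, Prod.snd_add, TensorProduct.tmul_add]
          abel
        map_smul' := fun r p => by
          simp only [RingHom.id_apply]
          rw [hsm]
          show ε ⊗ₜ[A] (r.fst • p.1 + r.snd • p.2) + (1 : TrivSqZeroExt A A) ⊗ₜ[A] (r.fst • p.2)
            = r • (ε ⊗ₜ[A] p.1 + (1 : TrivSqZeroExt A A) ⊗ₜ[A] p.2)
          rw [TensorProduct.tmul_add, key, key, key, smul_add,
            TensorProduct.smul_tmul', TensorProduct.smul_tmul', smul_eq_mul, smul_eq_mul,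
            mul_one, hre, add_assoc, ← TensorProduct.add_tmul, add_comm (r.snd • ε), h1] }
    have hφψ : ∀ p : U × U, φ (ψf p) = p := by
      intro p
      show φ (ε ⊗ₜ[A] p.1 + (1 : TrivSqZeroExt A A) ⊗ₜ[A] p.2) = p
      simp [φ, bil, TensorProduct.lift.tmul, hε, Prod.ext_iff]
    have hψφ : ∀ t : TrivSqZeroExt A A ⊗[A] U, ψf (φ t) = t := by
      intro t
      induction t using TensorProduct.induction_on with
      | zero => simp
      | tmul s u =>
        show ψf (φ (s ⊗ₜ[A] u)) = s ⊗ₜ[A] u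
        have hφt : φ (s ⊗ₜ[A] u) = (s.snd • u, s.fst • u) := by
          simp [φ, bil, TensorProduct.lift.tmul]
        rw [hφt]
        show ε ⊗ₜ[A] (s.snd • u) + (1 : TrivSqZeroExt A A) ⊗ₜ[A] (s.fst • u) = s ⊗ₜ[A] u
        rw [key, key, ← TensorProduct.add_tmul, add_comm, h1]
      | add x y hx hy =>
        rw [map_add, map_add, hx, hy]
    have hinj : Function.Injective ⇑ψf := fun a b hab => by
      rw [← hφψ a, ← hφψ b, hab]
    let φR := @LinearMap.mk (TrivSqZeroExt A A) (TrivSqZeroExt A A) _ _ (RingHom.id _)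
        (TrivSqZeroExt A A ⊗[A] U) (U × U) _ _ _
        (pairModule ((LinearMap.snd A U U).prod 0) pf)
        ⟨fun t => φ t, fun t₁ t₂ => by simp⟩
        (fun r t => by
          simp only [RingHom.id_apply, AddHom.coe_mk]
          apply hinj
          rw [hψφ, map_smul, hψφ])
    have hri : φR ∘ₗ ψf = LinearMap.id := LinearMap.ext fun p => hφψ p
    exact Module.Flat.of_retract ψf φR hri
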